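/- For positive integers k, l and integer h with 0 ≤ h < min(k,l), the number of lattice points (u,v) in the rectangle {0,...,k-1}×{0,...,l-1} reachable from (0,h) by moving any number of steps south-west or north-west equals ⌊(h/2 + 1)²⌋, i.e., equals (h/2+1)² if h is even and ((h+1)/2)·((h+3)/2) if h is odd. -/

import Mathlib

/-- σ_{k,l}(h): number of points (u,v) with rows u ∈ [0,l), columns v ∈ [0,k),
reachable from (0,h): 0 ≤ u ≤ h−v and u ≡ h−v (mod 2). -/
def sigmaF (k l : ℕ) (h : ℤ) : ℕ :=
  ((Finset.range l ×ˢ Finset.range k).filter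
    (fun p => (p.1 : ℤ) ≤ h - p.2 ∧ (p.1 : ℤ) % 2 = (h - p.2) % 2)).card

lemma count1 (n m : ℕ) (hmn : m < n) :
    ((Finset.range n).filter (fun v => v ≤ m ∧ v % 2 = m % 2)).card = m / 2 + 1 := by
  rw [← Finset.card_range (m / 2 + 1)]
  apply Finset.card_nbij' (i := fun v => (m - v) / 2) (j := fun j => m - 2 * j)
  · intro a ha
    simp only [Finset.mem_coe, Finset.mem_filter, Finset.mem_range] at ha ⊢
    omega
  · intro b hb
    simp only [Finset.mem_coe, Finset.mem_filter, Finset.mem_range] at hb ⊢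
    omega
  · intro a ha
    simp only [Finset.mem_coe, Finset.mem_filter, Finset.mem_range] at ha ⊢
    omega
  · intro b hb
    simp only [Finset.mem_coe, Finset.mem_range] at hb ⊢
    omega

lemma sumlem (h : ℕ) :
    ∑ u ∈ Finset.range (h + 1), ((h - u) / 2 + 1) = (h + 2) ^ 2 / 4 := by
  induction h with
  | zero => simp
  | succ h ih =>
    rw [Finset.sum_range_succ']
    simp only [Nat.succ_sub_succ]
    rw [ih]
    have key : (h + 1 + 2) ^ 2 / 4 = (h + 2) ^ 2 / 4 + ((h + 1 - 0) / 2 + 1) := by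
      rcases Nat.even_or_odd h with ⟨m, rfl⟩ | ⟨m, rfl⟩
      · have e1 : (m + m + 1 + 2) ^ 2 = 4 * (m * m) + 12 * m + 9 := by ring
        have e2 : (m + m + 2) ^ 2 = 4 * (m * m) + 8 * m + 4 := by ring
        rw [e1, e2]
        generalize m * m = t
        omega
      · have e1 : (2 * m + 1 + 1 + 2) ^ 2 = 4 * (m * m) + 16 * m + 16 := by ring
        have e2 : (2 * m + 1 + 2) ^ 2 = 4 * (m * m) + 12 * m + 9 := by ring
        rw [e1, e2]
        generalize m * m = t
        omega
    omega

theorem stmt0 (k l : ℕ) (hk : 0 < k) (hl : 0 < l) (h : ℕ) (hh : h < min k l) :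
    sigmaF k l (h : ℤ) = (h + 2) ^ 2 / 4 ∧
    (Even h → sigmaF k l (h : ℤ) = (h / 2 + 1) ^ 2) ∧
    (¬ Even h → sigmaF k l (h : ℤ) = ((h + 1) / 2) * ((h + 3) / 2)) := by
  have hk' : h < k := lt_of_lt_of_le hh (min_le_left _ _)
  have hl' : h < l := lt_of_lt_of_le hh (min_le_right _ _)
  have main : sigmaF k l (h : ℤ) = (h + 2) ^ 2 / 4 := by
    unfold sigmaF
    rw [Finset.card_filter, Finset.sum_product]
    have step : ∀ u ∈ Finset.range l,
        (∑ v ∈ Finset.range k,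
          if (u : ℤ) ≤ (h : ℤ) - v ∧ (u : ℤ) % 2 = ((h : ℤ) - v) % 2 then 1 else 0) =
        if u ≤ h then (h - u) / 2 + 1 else 0 := by
      intro u _
      by_cases hu : u ≤ h
      · rw [if_pos hu, ← Finset.card_filter]
        have heq : (Finset.range k).filter
            (fun v : ℕ => (u : ℤ) ≤ (h : ℤ) - (v : ℤ) ∧ (u : ℤ) % 2 = ((h : ℤ) - (v : ℤ)) % 2) =
            (Finset.range k).filter (fun v : ℕ => v ≤ h - u ∧ v % 2 = (h - u) % 2) := by
          apply Finset.filter_congr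
          intro v _
          constructor <;> (rintro ⟨h1, h2⟩; constructor <;> omega)
        rw [heq, count1 k (h - u) (by omega)]
      · rw [if_neg hu]
        apply Finset.sum_eq_zero
        intro v _
        rw [if_neg]
        rintro ⟨h1, _⟩
        omega
    rw [Finset.sum_congr rfl step]
    have sub : ∑ u ∈ Finset.range l, (if u ≤ h then (h - u) / 2 + 1 else 0) =
        ∑ u ∈ Finset.range (h + 1), (if u ≤ h then (h - u) / 2 + 1 else 0) := by
      symm
      apply Finset.sum_subset
      · intro x hx
        simp only [Finset.mem_range] at hx ⊢
        omega
      · intro x _ hx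
        simp only [Finset.mem_range] at hx
        rw [if_neg (by omega)]
    rw [sub, Finset.sum_congr rfl (fun u hu => if_pos (by simp only [Finset.mem_range] at hu; omega)),
      sumlem]
  refine ⟨main, ?_, ?_⟩
  · rintro ⟨m, rfl⟩
    rw [main]
    have h1 : (m + m) / 2 = m := by omega
    rw [h1]
    have e1 : (m + m + 2) ^ 2 = 4 * ((m + 1) ^ 2) := by ring
    rw [e1]
    exact Nat.mul_div_cancel_left _ (by norm_num)
  · intro ho
    obtain ⟨m, rfl⟩ := Nat.odd_iff.mpr (Nat.not_even_iff.mp ho)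
    rw [main]
    have e1 : (2 * m + 1 + 2) ^ 2 = 4 * ((m + 1) * (m + 2)) + 1 := by ring
    rw [e1]
    have h1 : (2 * m + 1 + 1) / 2 = m + 1 := by omega
    have h2 : (2 * m + 1 + 3) / 2 = m + 2 := by omega
    rw [h1, h2]
    omega
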